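/- arXiv:0705.3773 — 2 statements merged into one kernel-verified Lean document; each statement's English description precedes it below -/
import Mathlib

section
/- Let γ, ρ ∈ (0,1) and let b ∈ Incomp(γ,ρ) be an incompressible unit vector in ℂⁿ. Then there exist j ∈ {1,2} and a set σ₁(b) ⊆ {1,…,n} of cardinality |σ₁(b)| ≥ c n with c ≥ ρ²γ/4, such that for all k ∈ σ₁(b): ρ/(2√(2n)) ≤ |b_{jk}| ≤ 1/√(γn), where b_{1k} = Re b_k and b_{2k} = Im b_k. -/
open scoped Classical

/-- A vector `b ∈ ℂⁿ` is sparse if its support has at most `γ n` coordinates. -/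
noncomputable def IsSparse {n : ℕ} (γ : ℝ) (b : EuclideanSpace ℂ (Fin n)) : Prop :=
  ((Finset.univ.filter fun k => b k ≠ 0).card : ℝ) ≤ γ * n

/-- A unit vector `b` is compressible if it is within Euclidean distance `ρ` of the set of
sparse vectors. -/
noncomputable def IsCompressible {n : ℕ} (γ ρ : ℝ) (b : EuclideanSpace ℂ (Fin n)) : Prop :=
  ‖b‖ = 1 ∧ ∃ s : EuclideanSpace ℂ (Fin n), IsSparse γ s ∧ ‖b - s‖ ≤ ρ

/-- A unit vector is incompressible if it is not compressible. -/
noncomputable def IsIncompressible {n : ℕ} (γ ρ : ℝ) (b : EuclideanSpace ℂ (Fin n)) : Prop :=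
  ‖b‖ = 1 ∧ ¬ ∃ s : EuclideanSpace ℂ (Fin n), IsSparse γ s ∧ ‖b - s‖ ≤ ρ

/-- **Lemma 1 (incompressible vectors are spread).** For an incompressible unit vector
`b ∈ Incomp(γ,ρ)` there are `j ∈ {1,2}` and a set `σ₁(b)` of at least `(ρ²γ/4) n` coordinates
on which `ρ/(2√(2n)) ≤ |b_{jk}| ≤ 1/√(γn)`, where `b_{1k} = Re b_k`, `b_{2k} = Im b_k`. -/
theorem incompressible_spread
    {n : ℕ} (γ ρ : ℝ) (hγ : γ ∈ Set.Ioo (0 : ℝ) 1) (hρ : ρ ∈ Set.Ioo (0 : ℝ) 1)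
    (b : EuclideanSpace ℂ (Fin n)) (hb : IsIncompressible γ ρ b) :
    ∃ j : Fin 2, ∃ σ₁ : Finset (Fin n),
      ρ ^ 2 * γ / 4 * n ≤ (σ₁.card : ℝ) ∧
      ∀ k ∈ σ₁,
        ρ / (2 * Real.sqrt (2 * n)) ≤ |if j = 0 then (b k).re else (b k).im| ∧
        |if j = 0 then (b k).re else (b k).im| ≤ 1 / Real.sqrt (γ * n) := by
  obtain ⟨hbnorm, hinc⟩ := hb
  obtain ⟨hγ0, hγ1⟩ := hγ
  obtain ⟨hρ0, hρ1⟩ := hρ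
  rcases Nat.eq_zero_or_pos n with hn | hn
  · subst hn
    exact ⟨0, ∅, by simp, by simp⟩
  have hnpos : (0:ℝ) < n := by exact_mod_cast hn
  have hγn : (0:ℝ) < γ * n := by positivity
  have h2n : (0:ℝ) < 2 * n := by positivity
  -- total sum of squares is 1
  have htot : ∑ k, ‖b k‖ ^ 2 = 1 := by
    have h := EuclideanSpace.norm_eq b
    rw [hbnorm] at h
    exact Real.sqrt_eq_one.mp h.symm
  -- large coordinates
  set A : Finset (Fin n) := Finset.univ.filter (fun k => 1 / Real.sqrt (γ * n) < ‖b k‖) with hA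
  have hAterm : ∀ k ∈ A, 1 / (γ * n) ≤ ‖b k‖ ^ 2 := by
    intro k hk
    have hk' := (Finset.mem_filter.mp hk).2
    calc 1 / (γ * n) = (1 / Real.sqrt (γ * n)) ^ 2 := by
          rw [div_pow, one_pow, Real.sq_sqrt hγn.le]
      _ ≤ ‖b k‖ ^ 2 := pow_le_pow_left₀ (by positivity) hk'.le 2
  have hcardA : (A.card : ℝ) ≤ γ * n := by
    have h1 : (A.card : ℝ) * (1 / (γ * n)) ≤ ∑ k ∈ A, ‖b k‖ ^ 2 := by
      calc (A.card : ℝ) * (1 / (γ * n)) = ∑ _k ∈ A, 1 / (γ * n) := by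
            rw [Finset.sum_const, nsmul_eq_mul]
        _ ≤ _ := Finset.sum_le_sum hAterm
    have h2 : ∑ k ∈ A, ‖b k‖ ^ 2 ≤ 1 := by
      rw [← htot]
      exact Finset.sum_le_sum_of_subset_of_nonneg (Finset.subset_univ A)
        (fun i _ _ => sq_nonneg _)
    have h3 : (A.card : ℝ) * (1 / (γ * n)) ≤ 1 := h1.trans h2
    rw [mul_one_div, div_le_one hγn] at h3
    exact h3
  -- the sparse truncation
  set s : EuclideanSpace ℂ (Fin n) := WithLp.toLp 2 (fun k => if k ∈ A then b k else 0) with hs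
  have hsparse : IsSparse γ s := by
    refine le_trans ?_ hcardA
    have hsub : (Finset.univ.filter fun k => s k ≠ 0) ⊆ A := by
      intro k hk
      rw [Finset.mem_filter] at hk
      by_contra h
      exact hk.2 (by simp [hs, h])
    exact_mod_cast Finset.card_le_card hsub
  have hlt : ρ < ‖b - s‖ := lt_of_not_ge (fun h => hinc ⟨s, hsparse, h⟩)
  -- mass outside A exceeds ρ²
  set Ac : Finset (Fin n) := Finset.univ.filter (fun k => k ∉ A) with hAc
  have hmass : ρ ^ 2 < ∑ k ∈ Ac, ‖b k‖ ^ 2 := by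
    have h1 : ρ ^ 2 < ‖b - s‖ ^ 2 := by nlinarith [norm_nonneg (b - s)]
    have h2 : ‖b - s‖ ^ 2 = ∑ k, ‖(b - s) k‖ ^ 2 := by
      rw [EuclideanSpace.norm_eq, Real.sq_sqrt (Finset.sum_nonneg fun i _ => sq_nonneg _)]
    have h3 : ∑ k, ‖(b - s) k‖ ^ 2 = ∑ k ∈ Ac, ‖b k‖ ^ 2 := by
      rw [hAc, Finset.sum_filter]
      refine Finset.sum_congr rfl fun k _ => ?_
      by_cases h : k ∈ A <;> simp [hs, h, sub_zero]
    rw [h2, h3] at h1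
    exact h1
  -- medium coordinates
  set σ : Finset (Fin n) := Ac.filter (fun k => ρ / Real.sqrt (2 * n) ≤ ‖b k‖) with hσ
  have hsmall : ∑ k ∈ Ac \ σ, ‖b k‖ ^ 2 ≤ ρ ^ 2 / 2 := by
    have hterm : ∀ k ∈ Ac \ σ, ‖b k‖ ^ 2 ≤ ρ ^ 2 / (2 * n) := by
      intro k hk
      rw [Finset.mem_sdiff] at hk
      have hk2 : ¬ (ρ / Real.sqrt (2 * n) ≤ ‖b k‖) := by
        intro h
        exact hk.2 (Finset.mem_filter.mpr ⟨hk.1, h⟩)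
      push_neg at hk2
      calc ‖b k‖ ^ 2 ≤ (ρ / Real.sqrt (2 * n)) ^ 2 :=
            pow_le_pow_left₀ (norm_nonneg _) hk2.le 2
        _ = ρ ^ 2 / (2 * n) := by rw [div_pow, Real.sq_sqrt h2n.le]
    calc ∑ k ∈ Ac \ σ, ‖b k‖ ^ 2 ≤ ∑ _k ∈ Ac \ σ, ρ ^ 2 / (2 * n) :=
          Finset.sum_le_sum hterm
      _ = ((Ac \ σ).card : ℝ) * (ρ ^ 2 / (2 * n)) := by rw [Finset.sum_const, nsmul_eq_mul]
      _ ≤ (n : ℝ) * (ρ ^ 2 / (2 * n)) := by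
          apply mul_le_mul_of_nonneg_right _ (by positivity)
          have := Finset.card_le_univ (Ac \ σ)
          simpa using (Nat.cast_le.mpr this : ((Ac \ σ).card : ℝ) ≤ (Fintype.card (Fin n) : ℝ))
      _ = ρ ^ 2 / 2 := by field_simp
  have hσmass : ρ ^ 2 / 2 < ∑ k ∈ σ, ‖b k‖ ^ 2 := by
    have hsub : σ ⊆ Ac := Finset.filter_subset _ _
    have := Finset.sum_sdiff hsub (f := fun k => ‖b k‖ ^ 2)
    linarith [hmass, hsmall, this]
  have hσterm : ∀ k ∈ σ, ‖b k‖ ^ 2 ≤ 1 / (γ * n) := by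
    intro k hk
    have hk1 : k ∈ Ac := (Finset.mem_filter.mp hk).1
    have hk2 : ¬ (1 / Real.sqrt (γ * n) < ‖b k‖) := by
      have := (Finset.mem_filter.mp hk1).2
      rw [hA] at this
      simpa using this
    push_neg at hk2
    calc ‖b k‖ ^ 2 ≤ (1 / Real.sqrt (γ * n)) ^ 2 := pow_le_pow_left₀ (norm_nonneg _) hk2 2
      _ = 1 / (γ * n) := by rw [div_pow, one_pow, Real.sq_sqrt hγn.le]
  have hσcard : ρ ^ 2 * γ / 2 * n < (σ.card : ℝ) := by
    have h1 : ∑ k ∈ σ, ‖b k‖ ^ 2 ≤ (σ.card : ℝ) * (1 / (γ * n)) := by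
      calc ∑ k ∈ σ, ‖b k‖ ^ 2 ≤ ∑ _k ∈ σ, 1 / (γ * n) := Finset.sum_le_sum hσterm
        _ = (σ.card : ℝ) * (1 / (γ * n)) := by rw [Finset.sum_const, nsmul_eq_mul]
    have h2 : ρ ^ 2 / 2 < (σ.card : ℝ) * (1 / (γ * n)) := lt_of_lt_of_le hσmass h1
    rw [mul_one_div, lt_div_iff₀ hγn] at h2
    nlinarith
  -- bounds on σ
  have hσbound : ∀ k ∈ σ, ρ / Real.sqrt (2 * n) ≤ ‖b k‖ ∧ ‖b k‖ ≤ 1 / Real.sqrt (γ * n) := by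
    intro k hk
    refine ⟨(Finset.mem_filter.mp hk).2, ?_⟩
    have hk1 : k ∈ Ac := (Finset.mem_filter.mp hk).1
    have hk2 := (Finset.mem_filter.mp hk1).2
    rw [hA] at hk2
    simp only [Finset.mem_filter, Finset.mem_univ, true_and, not_lt] at hk2
    exact hk2
  -- split into re-dominant and im-dominant parts
  set σre : Finset (Fin n) := σ.filter (fun k => |(b k).im| ≤ |(b k).re|) with hσre
  set σim : Finset (Fin n) := σ.filter (fun k => ¬ |(b k).im| ≤ |(b k).re|) with hσim
  have hsplit : σre.card + σim.card = σ.card :=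
    Finset.card_filter_add_card_filter_not (p := fun k => |(b k).im| ≤ |(b k).re|)
  have key : ∀ k ∈ σ, ρ / (2 * Real.sqrt (2 * n)) ≤ max |(b k).re| |(b k).im| ∧
      |(b k).re| ≤ 1 / Real.sqrt (γ * n) ∧ |(b k).im| ≤ 1 / Real.sqrt (γ * n) := by
    intro k hk
    obtain ⟨hlo, hhi⟩ := hσbound k hk
    have habs : ‖b k‖ = ‖b k‖ := rfl
    have h1 : ‖b k‖ ≤ |(b k).re| + |(b k).im| :=
      Complex.norm_le_abs_re_add_abs_im _
    have h2 : |(b k).re| ≤ ‖b k‖ := Complex.abs_re_le_norm _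
    have h3 : |(b k).im| ≤ ‖b k‖ := Complex.abs_im_le_norm _
    refine ⟨?_, by rw [habs] at hhi; linarith, by rw [habs] at hhi; linarith⟩
    have h4 : ρ / Real.sqrt (2 * n) ≤ |(b k).re| + |(b k).im| := by
      rw [habs] at hlo; linarith
    have h5 : |(b k).re| + |(b k).im| ≤ 2 * max |(b k).re| |(b k).im| := by
      have := le_max_left |(b k).re| |(b k).im|
      have := le_max_right |(b k).re| |(b k).im|
      linarith
    have heq : ρ / (2 * Real.sqrt (2 * n)) = (ρ / Real.sqrt (2 * n)) / 2 := by ring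
    rw [heq]
    linarith
  by_cases hcase : (σ.card : ℝ) / 2 ≤ (σre.card : ℝ)
  · refine ⟨0, σre, by push_cast at hsplit ⊢; nlinarith, ?_⟩
    intro k hk
    have hkσ : k ∈ σ := Finset.mem_filter.mp hk |>.1
    have hdom : |(b k).im| ≤ |(b k).re| := (Finset.mem_filter.mp hk).2
    obtain ⟨h1, h2, h3⟩ := key k hkσ
    have hmax : max |(b k).re| |(b k).im| = |(b k).re| := max_eq_left hdom
    rw [hmax] at h1
    simp only [if_pos rfl]
    exact ⟨h1, h2⟩
  · refine ⟨1, σim, ?_, ?_⟩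
    · push_neg at hcase
      have : ((σre.card : ℝ) + σim.card) = σ.card := by exact_mod_cast hsplit
      nlinarith
    · intro k hk
      have hkσ : k ∈ σ := Finset.mem_filter.mp hk |>.1
      have hdom : ¬ |(b k).im| ≤ |(b k).re| := (Finset.mem_filter.mp hk).2
      obtain ⟨h1, h2, h3⟩ := key k hkσ
      have hmax : max |(b k).re| |(b k).im| = |(b k).im| := max_eq_right (le_of_not_ge hdom)
      rw [hmax] at h1
      have : (1 : Fin 2) ≠ 0 := by decide
      simp only [if_neg this]
      exact ⟨h1, h3⟩
end

section
/- For every complex number z and every real r > 0: ∫_{−π}^{π} log| z − r e^{iθ} | dθ = 2π log r if |z| ≤ r, and = 2π log|z| if |z| > r. -/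
open Real MeasureTheory intervalIntegral Set

-- step 1: log integrable on 0..1
lemma L1 : IntervalIntegrable Real.log volume 0 1 := by
  have h : IntervalIntegrable (fun x : ℝ => -Real.log x) volume 0 1 := by
    apply intervalIntegrable_deriv_of_nonneg
      (g := fun x => x - x * Real.log x)
    · exact (continuous_id.sub Real.continuous_mul_log).continuousOn
    · intro x hx
      simp only [min_def, max_def] at hx
      norm_num at hx
      have h1 : HasDerivAt (fun x : ℝ => x - x * Real.log x)
          (1 - (Real.log x + 1)) x :=
        (hasDerivAt_id x).sub (Real.hasDerivAt_mul_log hx.1.ne')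
      convert h1 using 1; ring
    · intro x hx
      simp only [min_def, max_def] at hx
      norm_num at hx
      simp only [neg_nonneg]
      exact Real.log_nonpos hx.1.le hx.2.le
  have := h.neg
  simp only [Pi.neg_def, neg_neg] at this
  exact this

lemma L2 : IntervalIntegrable Real.log volume 0 π := by
  refine L1.trans (intervalIntegrable_log ?_)
  intro h
  rw [Set.mem_uIcc] at h
  have := Real.pi_gt_three
  rcases h with ⟨h1, _⟩ | ⟨_, h2⟩ <;> linarith

noncomputable def gg (θ : ℝ) : ℝ := Real.log (‖1 - Complex.exp (θ * Complex.I)‖)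

lemma L3 (θ : ℝ) : ‖1 - Complex.exp (θ * Complex.I)‖ = 2 * |Real.sin (θ/2)| := by
  rw [Real.abs_sin_half, Complex.norm_def, Complex.normSq_apply]
  have h1 : (1 - Complex.exp (θ * Complex.I)).re = 1 - Real.cos θ := by
    simp [Complex.exp_ofReal_mul_I_re]
  have h2 : (1 - Complex.exp (θ * Complex.I)).im = -Real.sin θ := by
    simp [Complex.exp_ofReal_mul_I_im]
  rw [h1, h2]
  rw [show (1 - Real.cos θ) * (1 - Real.cos θ) + (-Real.sin θ) * (-Real.sin θ)
      = 4 * ((1 - Real.cos θ)/2) by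
    have := Real.sin_sq_add_cos_sq θ; nlinarith]
  rw [show (4 : ℝ) * ((1 - Real.cos θ)/2) = 2^2 * ((1 - Real.cos θ)/2) by norm_num]
  rw [Real.sqrt_mul (by positivity), Real.sqrt_sq (by norm_num)]

lemma gper : Function.Periodic gg (2*π) := by
  intro x
  unfold gg
  congr 2
  push_cast
  rw [add_mul, Complex.exp_add]
  simp [Complex.exp_two_pi_mul_I]

lemma gneg (θ : ℝ) : gg (-θ) = gg θ := by
  unfold gg
  congr 1
  have : (1 : ℂ) - Complex.exp (↑(-θ) * Complex.I)
      = (starRingEnd ℂ) (1 - Complex.exp (θ * Complex.I)) := by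
    rw [map_sub, map_one, ← Complex.exp_conj]
    push_cast
    simp
  rw [this, Complex.norm_conj]

lemma gmeas : Measurable gg :=
  Real.measurable_log.comp (continuous_norm.comp
    (continuous_const.sub (Complex.continuous_exp.comp
      (Complex.continuous_ofReal.mul continuous_const)))).measurable

lemma gint0pi : IntervalIntegrable gg volume 0 π := by
  rw [intervalIntegrable_iff_integrableOn_Ioc_of_le Real.pi_pos.le]
  have hbound : IntegrableOn (fun θ : ℝ => 2 * |Real.log θ| + Real.log (π/2)) (Ioc 0 π) volume := by
    have h1 : IntegrableOn (fun θ : ℝ => |Real.log θ|) (Ioc 0 π) volume := by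
      have := (L2.abs)
      rwa [intervalIntegrable_iff_integrableOn_Ioc_of_le Real.pi_pos.le] at this
    exact ((h1.const_mul 2).add (integrableOn_const measure_Ioc_lt_top.ne))
  refine Integrable.mono' hbound gmeas.aestronglyMeasurable ?_
  rw [ae_restrict_iff' measurableSet_Ioc]
  refine Filter.Eventually.of_forall (fun θ hθ => ?_)
  obtain ⟨h0, hpi⟩ := hθ
  have hs : Real.sin (θ/2) ≥ θ/π := by
    have := Real.mul_le_sin (x := θ/2) (by linarith) (by linarith)
    calc θ/π = 2/π * (θ/2) := by field_simp
    _ ≤ Real.sin (θ/2) := this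
  have hs2 : Real.sin (θ/2) ≤ θ/2 := Real.sin_le (by linarith)
  have hspos : 0 < Real.sin (θ/2) := lt_of_lt_of_le (by positivity) hs
  have habs : ‖1 - Complex.exp (θ * Complex.I)‖ = 2 * Real.sin (θ/2) := by
    rw [L3, abs_of_pos hspos]
  have hgθ : gg θ = Real.log (2 * Real.sin (θ/2)) := by unfold gg; rw [habs]
  have hup : gg θ ≤ Real.log θ := by
    rw [hgθ]
    exact Real.log_le_log (by positivity) (by linarith)
  have hlo : Real.log θ - Real.log (π/2) ≤ gg θ := by
    rw [hgθ, ← Real.log_div h0.ne' (by positivity)]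
    refine Real.log_le_log (by positivity) ?_
    rw [div_div_eq_mul_div, div_le_iff₀ Real.pi_pos]
    have h5 := mul_le_mul_of_nonneg_right hs Real.pi_pos.le
    rw [div_mul_cancel₀ θ Real.pi_pos.ne'] at h5
    linarith
  have hlog2 : (0:ℝ) ≤ Real.log (π/2) := Real.log_nonneg (by nlinarith [Real.pi_gt_three])
  rw [Real.norm_eq_abs, abs_le]
  constructor
  · nlinarith [neg_abs_le (Real.log θ), abs_nonneg (Real.log θ)]
  · nlinarith [le_abs_self (Real.log θ), abs_nonneg (Real.log θ)]

lemma gintneg : IntervalIntegrable gg volume (-π) 0 := by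
  have h := (IntervalIntegrable.iff_comp_neg (f := gg) (a := 0) (b := π)).mp gint0pi
  simp only [neg_zero] at h
  rw [show (fun x => gg (-x)) = gg from funext gneg] at h
  exact h.symm

lemma gintpi2pi : IntervalIntegrable gg volume π (2*π) := by
  have h := gintneg.comp_add_right (-(2*π))
  rw [show (fun x => gg (x + -(2*π))) = gg from funext (fun x => by
    rw [← sub_eq_add_neg, gper.sub_eq])] at h
  norm_num at h
  convert h using 2 <;> ring

lemma gfull : IntervalIntegrable gg volume (-(2*π)) (2*π) := by
  have hneg2 : IntervalIntegrable gg volume (-(2*π)) (-π) := by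
    have h := (IntervalIntegrable.iff_comp_neg (f := gg) (a := π) (b := 2*π)).mp gintpi2pi
    rw [show (fun x => gg (-x)) = gg from funext gneg] at h
    exact h.symm
  exact ((hneg2.trans gintneg).trans gint0pi).trans gintpi2pi

lemma ae_sin_ne : ∀ᵐ u : ℝ, Real.sin u ≠ 0 := by
  have hsub : {u : ℝ | Real.sin u = 0} ⊆ Set.range (fun n : ℤ => (n:ℝ)*π) := by
    intro u hu
    obtain ⟨n, hn⟩ := Real.sin_eq_zero_iff.mp hu
    exact ⟨n, hn⟩
  have h0 : volume {u : ℝ | Real.sin u = 0} = 0 :=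
    measure_mono_null hsub (Set.Countable.measure_zero (Set.countable_range _) _)
  exact (MeasureTheory.ae_iff).mpr (by simpa using h0)

lemma gdouble : ∀ᵐ u : ℝ, gg (2*u) = gg u + gg (u + π) := by
  filter_upwards [ae_sin_ne] with u hu
  set w := Complex.exp (u * Complex.I) with hw
  have h1w : (1:ℂ) - w ≠ 0 := by
    intro h
    apply hu
    have : w = 1 := by linear_combination -h
    have := congrArg Complex.im this
    simpa [hw, Complex.exp_ofReal_mul_I_im] using this
  have h2w : (1:ℂ) + w ≠ 0 := by
    intro h
    apply hu
    have : w = -1 := by linear_combination h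
    have := congrArg Complex.im this
    simpa [hw, Complex.exp_ofReal_mul_I_im] using this
  have hsq : Complex.exp (↑(2*u) * Complex.I) = w * w := by
    rw [hw, ← Complex.exp_add]
    push_cast
    ring_nf
  have hshift : Complex.exp (↑(u + π) * Complex.I) = -w := by
    rw [hw, ← neg_one_mul, ← Complex.exp_pi_mul_I, ← Complex.exp_add]
    push_cast
    ring_nf
  unfold gg
  rw [hsq, hshift]
  rw [show (1:ℂ) - w * w = (1 - w) * (1 + w) by ring,
    show (1:ℂ) - -w = 1 + w by ring, norm_mul]
  rw [Real.log_mul ((norm_ne_zero_iff.mpr h1w)) ((norm_ne_zero_iff.mpr h2w))]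

lemma I0 : ∫ θ in (-π)..π, gg θ = 0 := by
  have hshift : ∫ θ in (-π)..π, gg θ = ∫ θ in (0:ℝ)..2*π, gg θ := by
    have h := gper.intervalIntegral_add_eq (-π) 0
    rw [show -π + 2*π = π by ring, zero_add] at h
    exact h
  have hmul : (2:ℝ) * ∫ u in (0:ℝ)..π, gg (2*u) = ∫ θ in (0:ℝ)..2*π, gg θ := by
    have h := intervalIntegral.mul_integral_comp_mul_left (a := (0:ℝ)) (b := π) (f := gg) 2
    rwa [mul_zero] at h
  have hcongr : ∫ u in (0:ℝ)..π, gg (2*u) = ∫ u in (0:ℝ)..π, (gg u + gg (u + π)) := by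
    apply intervalIntegral.integral_congr_ae
    filter_upwards [gdouble] with u hu _
    exact hu
  have hint2 : IntervalIntegrable (fun u => gg (u + π)) volume 0 π := by
    have h := gintpi2pi.comp_add_right π
    norm_num at h
    convert h using 2
    ring
  have hadd : ∫ u in (0:ℝ)..π, (gg u + gg (u + π))
      = (∫ u in (0:ℝ)..π, gg u) + ∫ u in (0:ℝ)..π, gg (u + π) :=
    intervalIntegral.integral_add gint0pi hint2
  have hcomp : ∫ u in (0:ℝ)..π, gg (u + π) = ∫ u in π..2*π, gg u := by
    have h := intervalIntegral.integral_comp_add_right (a := (0:ℝ)) (b := π) gg π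
    rw [zero_add, show π + π = 2*π by ring] at h
    exact h
  have hglue : (∫ u in (0:ℝ)..π, gg u) + (∫ u in π..2*π, gg u) = ∫ θ in (0:ℝ)..2*π, gg θ :=
    intervalIntegral.integral_add_adjacent_intervals gint0pi gintpi2pi
  rw [hshift]
  have hJ : ∫ u in (0:ℝ)..π, gg (2*u) = ∫ θ in (0:ℝ)..2*π, gg θ := by
    rw [hcongr, hadd, hcomp, hglue]
  linarith

lemma meanA {a : ℂ} (ha : ‖a‖ < 1) :
    ∫ θ in (-π)..π, Real.log (‖1 - a * Complex.exp (θ * Complex.I)‖) = 0 := by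
  have hslit : ∀ w : ℂ, ‖w‖ ≤ 1 → (1 - a * w) ∈ Complex.slitPlane := by
    intro w hw
    left
    have h1 : ‖a * w‖ < 1 := by
      rw [norm_mul]
      nlinarith [norm_nonneg w, norm_nonneg a]
    have h2 : (a * w).re ≤ ‖a * w‖ := Complex.re_le_norm _
    simp only [Complex.sub_re, Complex.one_re]
    linarith
  have hd : DifferentiableOn ℂ (fun w => Complex.log (1 - a * w)) (Metric.closedBall 0 1) := by
    intro w hw
    have hw1 : ‖w‖ ≤ 1 := by
      simpa [Complex.dist_eq] using Metric.mem_closedBall.mp hw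
    exact ((Complex.differentiableAt_log (hslit w hw1)).comp w
      ((differentiableAt_const _).sub (differentiableAt_id.const_mul a))).differentiableWithinAt
  have hcauchy := hd.circleIntegral_sub_inv_smul (Metric.mem_ball_self one_pos)
  simp only [mul_zero, sub_zero, Complex.log_one, smul_zero] at hcauchy
  rw [circleIntegral] at hcauchy
  simp only [deriv_circleMap, circleMap, Complex.ofReal_one, zero_add, one_mul, sub_zero,
    smul_eq_mul] at hcauchy
  have heq : ∀ θ : ℝ, Complex.exp (θ * Complex.I) * Complex.I *
      ((Complex.exp (θ * Complex.I))⁻¹ * Complex.log (1 - a * Complex.exp (θ * Complex.I)))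
      = Complex.I * Complex.log (1 - a * Complex.exp (θ * Complex.I)) := by
    intro θ
    have h := Complex.exp_ne_zero (θ * Complex.I)
    field_simp
  rw [intervalIntegral.integral_congr (fun θ _ => heq θ)] at hcauchy
  rw [intervalIntegral.integral_const_mul] at hcauchy
  have hI : (Complex.I : ℂ) ≠ 0 := Complex.I_ne_zero
  have hzero : ∫ θ in (0:ℝ)..2*π, Complex.log (1 - a * Complex.exp (θ * Complex.I)) = 0 :=
    (mul_eq_zero.mp hcauchy).resolve_left hI
  -- continuity / integrability
  have hcont : Continuous fun θ : ℝ => Complex.log (1 - a * Complex.exp (θ * Complex.I)) := by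
    rw [continuous_iff_continuousAt]
    intro θ
    have hin : Continuous fun θ : ℝ => (1 : ℂ) - a * Complex.exp (θ * Complex.I) :=
      continuous_const.sub (continuous_const.mul (Complex.continuous_exp.comp
        (Complex.continuous_ofReal.mul continuous_const)))
    have h1 : ContinuousAt Complex.log (1 - a * Complex.exp (θ * Complex.I)) :=
      (Complex.differentiableAt_log (hslit (Complex.exp (θ * Complex.I))
        (by simp [Complex.norm_exp_ofReal_mul_I]))).continuousAt
    exact ContinuousAt.comp (g := Complex.log)
      (f := fun θ : ℝ => (1:ℂ) - a * Complex.exp (θ * Complex.I)) h1 hin.continuousAt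
  have hintc : IntervalIntegrable
      (fun θ : ℝ => Complex.log (1 - a * Complex.exp (θ * Complex.I))) volume 0 (2*π) :=
    hcont.intervalIntegrable _ _
  have hre := Complex.reCLM.intervalIntegral_comp_comm hintc
  rw [hzero] at hre
  simp only [Complex.reCLM_apply, Complex.log_re, map_zero] at hre
  -- hre : ∫ θ in 0..2π, Real.log (abs (1 - a * exp (θI))) = 0 (sides flipped?)
  have hper : Function.Periodic
      (fun θ : ℝ => Real.log (‖1 - a * Complex.exp (θ * Complex.I)‖)) (2*π) := by
    intro x
    simp only
    congr 3
    push_cast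
    rw [add_mul, Complex.exp_add]
    simp [Complex.exp_two_pi_mul_I]
  have hshift := hper.intervalIntegral_add_eq (-π) 0
  rw [show -π + 2*π = π by ring, zero_add] at hshift
  rw [hshift]
  exact hre

lemma meanB {a : ℂ} (ha : ‖a‖ = 1) :
    IntervalIntegrable (fun θ : ℝ => Real.log (‖1 - a * Complex.exp (θ * Complex.I)‖))
      volume (-π) π ∧
    ∫ θ in (-π)..π, Real.log (‖1 - a * Complex.exp (θ * Complex.I)‖) = 0 := by
  set ψ := Complex.arg a with hψdef
  have haψ : a = Complex.exp (ψ * Complex.I) := by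
    have h := Complex.norm_mul_exp_arg_mul_I a
    rw [ha] at h
    simpa using h.symm
  have hfun : (fun θ : ℝ => Real.log (‖1 - a * Complex.exp (θ * Complex.I)‖))
      = fun θ => gg (θ + ψ) := by
    funext θ
    unfold gg
    have h : a * Complex.exp (θ * Complex.I) = Complex.exp (↑(θ + ψ) * Complex.I) := by
      rw [haψ, ← Complex.exp_add]
      push_cast
      ring_nf
    rw [h]
  have hψ1 : -π < ψ := Complex.neg_pi_lt_arg a
  have hψ2 : ψ ≤ π := Complex.arg_le_pi a
  have hsub : Set.uIcc (-π + ψ) (π + ψ) ⊆ Set.uIcc (-(2*π)) (2*π) := by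
    apply Set.uIcc_subset_uIcc <;> rw [Set.mem_uIcc] <;> left <;>
      exact ⟨by linarith [Real.pi_pos], by linarith [Real.pi_pos]⟩
  have hint : IntervalIntegrable (fun θ => gg (θ + ψ)) volume (-π) π := by
    have h := (gfull.mono_set hsub).comp_add_right ψ
    rw [show -π + ψ - ψ = -π by ring, show π + ψ - ψ = π by ring] at h
    exact h
  have hval : ∫ θ in (-π)..π, gg (θ + ψ) = 0 := by
    rw [intervalIntegral.integral_comp_add_right]
    have h := gper.intervalIntegral_add_eq (-π + ψ) (-π)
    rw [show -π + ψ + 2*π = π + ψ by ring, show -π + 2*π = π by ring] at h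
    rw [h]
    exact I0
  rw [hfun]
  exact ⟨hint, hval⟩

/-- **The circular averaging identity for the logarithm.** For `z ∈ ℂ` and `r > 0`,
`∫_{−π}^{π} log|z − r e^{iθ}| dθ` equals `2π log r` if `|z| ≤ r` and `2π log|z|` if `|z| > r`. -/
theorem integral_log_abs_sub_circle (z : ℂ) (r : ℝ) (hr : 0 < r) :
    (‖z‖ ≤ r →
      ∫ θ in (-Real.pi)..Real.pi,
          Real.log (‖z - r * Complex.exp (θ * Complex.I)‖)
        = 2 * Real.pi * Real.log r) ∧
    (r < ‖z‖ →
      ∫ θ in (-Real.pi)..Real.pi,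
          Real.log (‖z - r * Complex.exp (θ * Complex.I)‖)
        = 2 * Real.pi * Real.log (‖z‖)) := by
  have hr0 : (r:ℂ) ≠ 0 := by exact_mod_cast hr.ne'
  constructor
  · intro hzr
    set b : ℂ := (starRingEnd ℂ) z / r with hb
    have habsb : ‖b‖ = ‖z‖ / r := by
      rw [hb, norm_div, Complex.norm_conj, Complex.norm_real, Real.norm_eq_abs, abs_of_pos hr]
    have key : ∀ θ : ℝ, ‖z - r * Complex.exp (θ * Complex.I)‖
        = r * ‖1 - b * Complex.exp (θ * Complex.I)‖ := by
      intro θ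
      set w := Complex.exp (θ * Complex.I) with hw
      have habsw : ‖w‖ = 1 := Complex.norm_exp_ofReal_mul_I θ
      have hww : w * (starRingEnd ℂ) w = 1 := by
        rw [Complex.mul_conj, Complex.normSq_eq_norm_sq, habsw]
        norm_num
      have hcb : (starRingEnd ℂ) b = z / ↑r := by
        rw [hb, map_div₀, Complex.conj_conj, Complex.conj_ofReal]
      have h1 : z - ↑r * w = -(w * (starRingEnd ℂ) (↑r * (1 - b * w))) := by
        simp only [map_mul, map_sub, map_one, hcb, Complex.conj_ofReal]
        have hdiv : z / (↑r:ℂ) * ↑r = z := div_mul_cancel₀ z hr0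
        linear_combination (-z) * hww + (-(w * (starRingEnd ℂ) w)) * hdiv
      rw [h1]
      simp only [norm_neg, norm_mul, Complex.norm_conj, habsw, one_mul,
        Complex.norm_real, Real.norm_eq_abs, abs_of_pos hr]
    rcases lt_or_eq_of_le hzr with hlt | heqz
    · -- |z| < r
      have hblt : ‖b‖ < 1 := by
        rw [habsb, div_lt_one hr]; exact hlt
      have hne : ∀ θ : ℝ, (1:ℂ) - b * Complex.exp (θ * Complex.I) ≠ 0 := by
        intro θ h
        have h2 : ‖b * Complex.exp (θ * Complex.I)‖ = 1 := by
          have h3 : b * Complex.exp (θ * Complex.I) = 1 := by linear_combination -h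
          rw [h3, norm_one]
        rw [norm_mul, Complex.norm_exp_ofReal_mul_I, mul_one] at h2
        exact absurd h2 hblt.ne
      have hpt : ∀ θ : ℝ, Real.log (‖z - r * Complex.exp (θ * Complex.I)‖)
          = Real.log r + Real.log (‖1 - b * Complex.exp (θ * Complex.I)‖) := by
        intro θ
        rw [key θ, Real.log_mul hr.ne' ((norm_ne_zero_iff.mpr (hne θ)))]
      rw [intervalIntegral.integral_congr (fun θ _ => hpt θ)]
      have hcont : Continuous fun θ : ℝ =>
          Real.log (‖1 - b * Complex.exp (θ * Complex.I)‖) := by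
        apply Continuous.log
        · exact continuous_norm.comp (continuous_const.sub (continuous_const.mul
            (Complex.continuous_exp.comp (Complex.continuous_ofReal.mul continuous_const))))
        · exact fun θ => (norm_ne_zero_iff.mpr (hne θ))
      rw [intervalIntegral.integral_add intervalIntegrable_const (hcont.intervalIntegrable _ _),
        meanA hblt, intervalIntegral.integral_const]
      simp only [sub_neg_eq_add, smul_eq_mul, add_zero]
      ring
    · -- |z| = r
      have hbeq : ‖b‖ = 1 := by
        rw [habsb, heqz, div_self hr.ne']
      obtain ⟨hint, hval⟩ := meanB hbeq
      set ψ := Complex.arg b with hψdef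
      have hbψ : b = Complex.exp (ψ * Complex.I) := by
        have h := Complex.norm_mul_exp_arg_mul_I b
        rw [hbeq] at h
        simpa using h.symm
      have hS : volume {θ : ℝ | Real.sin (θ + ψ) = 0} = 0 := by
        refine measure_mono_null (t := Set.range (fun n : ℤ => (n:ℝ)*π - ψ)) ?_
          (Set.Countable.measure_zero (Set.countable_range _) _)
        intro θ hθ
        obtain ⟨n, hn⟩ := Real.sin_eq_zero_iff.mp hθ
        exact ⟨n, by show (n:ℝ)*π - ψ = θ; linarith⟩
      have hae : ∀ᵐ θ : ℝ, Real.log (‖z - r * Complex.exp (θ * Complex.I)‖)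
          = Real.log r + Real.log (‖1 - b * Complex.exp (θ * Complex.I)‖) := by
        have hae0 : ∀ᵐ θ : ℝ, Real.sin (θ + ψ) ≠ 0 := by
          rw [MeasureTheory.ae_iff]
          simpa using hS
        filter_upwards [hae0] with θ hθ
        have hne : (1:ℂ) - b * Complex.exp (θ * Complex.I) ≠ 0 := by
          intro h
          apply hθ
          have hb1 : b * Complex.exp (θ * Complex.I)
              = Complex.exp (↑(θ + ψ) * Complex.I) := by
            rw [hbψ, ← Complex.exp_add]
            push_cast
            ring_nf
          have h4 : Complex.exp (↑(θ + ψ) * Complex.I) = 1 := by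
            rw [← hb1]
            linear_combination -h
          have h5 := congrArg Complex.im h4
          simpa only [Complex.exp_ofReal_mul_I_im, Complex.one_im] using h5
        rw [key θ, Real.log_mul hr.ne' ((norm_ne_zero_iff.mpr hne))]
      rw [intervalIntegral.integral_congr_ae (by filter_upwards [hae] with θ h _ using h)]
      rw [intervalIntegral.integral_add intervalIntegrable_const hint, hval,
        intervalIntegral.integral_const]
      simp only [sub_neg_eq_add, smul_eq_mul, add_zero]
      ring
  · intro hrz
    have hz0 : z ≠ 0 := by
      intro h
      rw [h, norm_zero] at hrz
      linarith
    set c : ℂ := ↑r / z with hc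
    have hclt : ‖c‖ < 1 := by
      rw [hc, norm_div, Complex.norm_real, Real.norm_eq_abs, abs_of_pos hr, div_lt_one (lt_trans hr hrz)]
      exact hrz
    have hne : ∀ θ : ℝ, (1:ℂ) - c * Complex.exp (θ * Complex.I) ≠ 0 := by
      intro θ h
      have h2 : ‖c * Complex.exp (θ * Complex.I)‖ = 1 := by
        have h3 : c * Complex.exp (θ * Complex.I) = 1 := by linear_combination -h
        rw [h3, norm_one]
      rw [norm_mul, Complex.norm_exp_ofReal_mul_I, mul_one] at h2
      exact absurd h2 hclt.ne
    have key2 : ∀ θ : ℝ, ‖z - r * Complex.exp (θ * Complex.I)‖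
        = ‖z‖ * ‖1 - c * Complex.exp (θ * Complex.I)‖ := by
      intro θ
      rw [← norm_mul]
      congr 1
      rw [hc]
      field_simp
    have hpt : ∀ θ : ℝ, Real.log (‖z - r * Complex.exp (θ * Complex.I)‖)
        = Real.log (‖z‖) + Real.log (‖1 - c * Complex.exp (θ * Complex.I)‖) := by
      intro θ
      rw [key2 θ, Real.log_mul ((norm_ne_zero_iff.mpr hz0)) ((norm_ne_zero_iff.mpr (hne θ)))]
    rw [intervalIntegral.integral_congr (fun θ _ => hpt θ)]
    have hcont : Continuous fun θ : ℝ =>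
        Real.log (‖1 - c * Complex.exp (θ * Complex.I)‖) := by
      apply Continuous.log
      · exact continuous_norm.comp (continuous_const.sub (continuous_const.mul
          (Complex.continuous_exp.comp (Complex.continuous_ofReal.mul continuous_const))))
      · exact fun θ => (norm_ne_zero_iff.mpr (hne θ))
    rw [intervalIntegral.integral_add intervalIntegrable_const (hcont.intervalIntegrable _ _),
      meanA hclt, intervalIntegral.integral_const]
    simp only [sub_neg_eq_add, smul_eq_mul, add_zero]
    ring
end
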